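/- Define g : [0,1] → ℝ by g(x) = Σ_{i=1}^∞ x_i · 4^(Σ_{j=1}^{i−1} x_j) · 5^(−i) for a binary expansion x = Σ x_i/2^i. Then the series converges absolutely, g(0)=0, g(1)=1, and g satisfies g(x) = (1/5)·g(2x) for 0 ≤ x < 1/2 and g(x) = (4/5)·g(2x−1) + 1/5 for 1/2 ≤ x ≤ 1, so g equals Salem's singular function L_{1/5}. -/

import Mathlib

/-- The `i`-th binary digit of `x` (indices from 1), using the terminating
(floor) expansion at dyadic rationals. -/
noncomputable def binDigit (x : ℝ) (i : ℕ) : ℕ := ⌊x * 2 ^ i⌋.toNat % 2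

/-- The function `f_{T0}(x) = Σ_{i≥1} x_i · 4^(Σ_{j<i} x_j) · 5^{-i}` obtained
from the 2D linear elementary CA `T₀` (with `g(1) = 1`, corresponding to the
all-ones expansion of `1`). -/
noncomputable def fT0 (x : ℝ) : ℝ :=
  if x = 1 then 1 else
    ∑' i : ℕ, (binDigit x (i + 1) : ℝ) *
      4 ^ (∑ j ∈ Finset.Icc 1 i, binDigit x j) * (1 / 5 : ℝ) ^ (i + 1)

private noncomputable def trm (x : ℝ) (i : ℕ) : ℝ :=
  (binDigit x (i + 1) : ℝ) *
    4 ^ (∑ j ∈ Finset.Icc 1 i, binDigit x j) * (1 / 5 : ℝ) ^ (i + 1)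

private lemma binDigit_le_one (x : ℝ) (i : ℕ) : binDigit x i ≤ 1 := by
  have : binDigit x i < 2 := Nat.mod_lt _ (by norm_num)
  omega

private lemma trm_nonneg (x : ℝ) (i : ℕ) : 0 ≤ trm x i := by
  unfold trm; positivity

private lemma trm_le (x : ℝ) (i : ℕ) : trm x i ≤ (1/5) * (4/5) ^ i := by
  have h1 : (binDigit x (i+1) : ℝ) ≤ 1 := by exact_mod_cast binDigit_le_one x (i+1)
  have h2 : (∑ j ∈ Finset.Icc 1 i, binDigit x j) ≤ i := by
    calc ∑ j ∈ Finset.Icc 1 i, binDigit x j ≤ ∑ j ∈ Finset.Icc 1 i, 1 :=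
          Finset.sum_le_sum fun j _ => binDigit_le_one x j
      _ = i := by simp
  have h3 : (4:ℝ) ^ (∑ j ∈ Finset.Icc 1 i, binDigit x j) ≤ 4 ^ i :=
    pow_le_pow_right₀ (by norm_num) h2
  have h4 : trm x i ≤ 1 * 4 ^ i * (1/5:ℝ) ^ (i+1) := by
    unfold trm
    apply mul_le_mul (mul_le_mul h1 h3 (by positivity) (by norm_num)) le_rfl (by positivity)
    norm_num
  have h5 : (1:ℝ) * 4 ^ i * (1/5:ℝ) ^ (i+1) = (1/5) * (4/5) ^ i := by
    rw [show ((4:ℝ)/5) = 4 * (1/5) by norm_num, mul_pow, pow_succ]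
    ring
  linarith

private lemma summable_trm (x : ℝ) : Summable (trm x) :=
  Summable.of_nonneg_of_le (trm_nonneg x) (trm_le x)
    (((summable_geometric_of_lt_one (by norm_num) (by norm_num)).mul_left _))

private lemma tsum_trm_le (x : ℝ) : ∑' i, trm x i ≤ 1 := by
  have h := Summable.tsum_le_tsum (trm_le x) (summable_trm x)
    ((summable_geometric_of_lt_one (by norm_num) (by norm_num)).mul_left _)
  calc ∑' i, trm x i ≤ ∑' i : ℕ, (1/5) * (4/5:ℝ) ^ i := h
    _ = (1/5) * ∑' i : ℕ, (4/5:ℝ) ^ i := tsum_mul_left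
    _ = 1 := by rw [tsum_geometric_of_lt_one (by norm_num) (by norm_num)]; norm_num

private lemma abs_fT0_le (x : ℝ) : |fT0 x| ≤ 1 := by
  by_cases h : x = 1
  · simp [fT0, h]
  · rw [show fT0 x = ∑' i, trm x i from if_neg h,
      abs_of_nonneg (tsum_nonneg (trm_nonneg x))]
    exact tsum_trm_le x

private lemma icc_sum (x : ℝ) (n : ℕ) :
    ∑ j ∈ Finset.Icc 1 n, binDigit x j = ∑ i ∈ Finset.range n, binDigit x (i+1) := by
  rw [← Finset.Ico_add_one_right_eq_Icc, Finset.sum_Ico_eq_sum_range]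
  simp [add_comm]

private lemma binDigit_shift (x : ℝ) (i : ℕ) : binDigit (2*x) i = binDigit x (i+1) := by
  unfold binDigit
  rw [show (2*x*2^i : ℝ) = x*2^(i+1) by rw [pow_succ]; ring]

private lemma binDigit_one_lt_half {x : ℝ} (hx : 0 ≤ x) (hx2 : x < 1/2) :
    binDigit x 1 = 0 := by
  unfold binDigit
  have : ⌊x * 2 ^ 1⌋ = 0 := by
    apply Int.floor_eq_zero_iff.mpr
    simp only [Set.mem_Ico]
    constructor
    · positivity
    · norm_num; linarith
  rw [this]; rfl

private lemma binDigit_one_ge_half {x : ℝ} (hx : 1/2 ≤ x) (hx1 : x < 1) :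
    binDigit x 1 = 1 := by
  unfold binDigit
  have : ⌊x * 2 ^ 1⌋ = 1 := by
    have h1 : ((1:ℤ):ℝ) ≤ x * 2 ^ 1 := by norm_num; linarith
    have h2 : x * 2 ^ 1 < (1:ℤ) + 1 := by norm_num; linarith
    exact Int.floor_eq_iff.mpr ⟨h1, by exact_mod_cast h2⟩
  rw [this]; rfl

private lemma binDigit_shift' {x : ℝ} (hx : 1/2 ≤ x) {i : ℕ} (hi : 1 ≤ i) :
    binDigit (2*x-1) i = binDigit x (i+1) := by
  unfold binDigit
  have h1 : ((2*x-1)*2^i : ℝ) = x*2^(i+1) - ((2^i : ℤ) : ℝ) := by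
    push_cast; rw [pow_succ]; ring
  rw [h1, Int.floor_sub_intCast]
  have h2 : (2:ℤ)^i ≤ ⌊x*2^(i+1)⌋ := by
    rw [Int.le_floor]
    push_cast
    rw [pow_succ]
    nlinarith [pow_pos (show (0:ℝ) < 2 by norm_num) i]
  have h5 : (2:ℤ)^i % 2 = 0 := by
    rw [show i = (i-1)+1 by omega, pow_succ]
    simp [Int.mul_emod]
  have h0 : (0:ℤ) ≤ 2^i := by positivity
  generalize ⌊x*2^(i+1)⌋ = m at h2 ⊢
  generalize (2:ℤ)^i = p at h0 h2 h5 ⊢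
  omega

private lemma trm_zero (x : ℝ) : trm x 0 = (binDigit x 1 : ℝ) * (1/5) := by
  unfold trm; simp

private lemma trm_succ_lt_half {x : ℝ} (hx : 0 ≤ x) (hx2 : x < 1/2) (k : ℕ) :
    trm x (k+1) = (1/5) * trm (2*x) k := by
  have hsum : ∑ j ∈ Finset.Icc 1 (k+1), binDigit x j
      = ∑ j ∈ Finset.Icc 1 k, binDigit (2*x) j := by
    rw [icc_sum, icc_sum, Finset.sum_range_succ']
    rw [binDigit_one_lt_half hx hx2]
    simp only [add_zero]
    exact Finset.sum_congr rfl fun i _ => by rw [binDigit_shift]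
  unfold trm
  rw [hsum, show k+1+1 = (k+1)+1 from rfl, ← binDigit_shift, pow_succ (1/5:ℝ) (k+1)]
  ring

private lemma trm_succ_ge_half {x : ℝ} (hx : 1/2 ≤ x) (hx1 : x < 1) (k : ℕ) :
    trm x (k+1) = (4/5) * trm (2*x-1) k := by
  have hsum : ∑ j ∈ Finset.Icc 1 (k+1), binDigit x j
      = 1 + ∑ j ∈ Finset.Icc 1 k, binDigit (2*x-1) j := by
    rw [icc_sum, icc_sum, Finset.sum_range_succ']
    rw [binDigit_one_ge_half hx hx1, add_comm]
    congr 1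
    exact Finset.sum_congr rfl fun i _ => by rw [binDigit_shift' hx (Nat.succ_le_succ (Nat.zero_le i))]
  unfold trm
  rw [hsum, ← binDigit_shift' hx (show 1 ≤ k+1 by omega), pow_add, pow_one,
    pow_succ (1/5:ℝ) (k+1)]
  ring

private lemma fT0_of_ne_one {x : ℝ} (hx : x ≠ 1) : fT0 x = ∑' i, trm x i := by
  unfold fT0 trm
  rw [if_neg hx]

/-- `f_{T0}` is given by an absolutely convergent series, takes the values 0
and 1 at the endpoints, and satisfies the de Rham functional equation with
parameter `1/5`; hence it equals Salem's singular function `L_{1/5}`. -/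
theorem fT0_eq_salem :
    (∀ x ∈ Set.Icc (0:ℝ) 1, Summable fun i : ℕ =>
      |(binDigit x (i + 1) : ℝ) *
        4 ^ (∑ j ∈ Finset.Icc 1 i, binDigit x j) * (1 / 5 : ℝ) ^ (i + 1)|) ∧
    fT0 0 = 0 ∧ fT0 1 = 1 ∧
    (∀ x ∈ Set.Ico (0:ℝ) (1/2), fT0 x = (1/5) * fT0 (2 * x)) ∧
    (∀ x ∈ Set.Icc (1/2:ℝ) 1, fT0 x = (4/5) * fT0 (2 * x - 1) + 1/5) ∧
    (∀ L : ℝ → ℝ, ContinuousOn L (Set.Icc 0 1) →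
      (∀ x ∈ Set.Ico (0:ℝ) (1/2), L x = (1/5) * L (2 * x)) →
      (∀ x ∈ Set.Icc (1/2:ℝ) 1, L x = (4/5) * L (2 * x - 1) + 1/5) →
      ∀ x ∈ Set.Icc (0:ℝ) 1, fT0 x = L x) := by
  have heq1 : ∀ x ∈ Set.Ico (0:ℝ) (1/2), fT0 x = (1/5) * fT0 (2 * x) := by
    rintro x ⟨hx0, hx2⟩
    have hxne : x ≠ 1 := by intro h; rw [h] at hx2; norm_num at hx2
    have h2xne : 2*x ≠ 1 := by intro h; nlinarith
    rw [fT0_of_ne_one hxne, fT0_of_ne_one h2xne,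
      Summable.tsum_eq_zero_add (summable_trm x)]
    rw [trm_zero, binDigit_one_lt_half hx0 hx2]
    simp only [Nat.cast_zero, zero_mul, zero_add]
    calc ∑' i, trm x (i+1) = ∑' i, (1/5) * trm (2*x) i := by
          exact tsum_congr fun i => trm_succ_lt_half hx0 hx2 i
      _ = (1/5) * ∑' i, trm (2*x) i := tsum_mul_left
  have heq2 : ∀ x ∈ Set.Icc (1/2:ℝ) 1, fT0 x = (4/5) * fT0 (2 * x - 1) + 1/5 := by
    rintro x ⟨hx0, hx1⟩
    rcases eq_or_lt_of_le hx1 with h1 | h1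
    · rw [h1]
      norm_num [fT0]
    · have hxne : x ≠ 1 := ne_of_lt h1
      have hyne : 2*x - 1 ≠ 1 := by intro h; nlinarith
      rw [fT0_of_ne_one hxne, fT0_of_ne_one hyne,
        Summable.tsum_eq_zero_add (summable_trm x)]
      rw [trm_zero, binDigit_one_ge_half hx0 h1]
      have : ∑' i, trm x (i+1) = (4/5) * ∑' i, trm (2*x-1) i := by
        rw [← tsum_mul_left]
        exact tsum_congr fun i => trm_succ_ge_half hx0 h1 i
      rw [this]
      ring
  refine ⟨?_, ?_, ?_, heq1, heq2, ?_⟩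
  · intro x _
    exact summable_abs_iff.mpr (summable_trm x)
  · rw [fT0_of_ne_one (by norm_num)]
    have : ∀ i : ℕ, trm 0 i = 0 := by
      intro i
      unfold trm binDigit
      norm_num
    simp [this]
  · unfold fT0; rw [if_pos rfl]
  · intro L hL hL1 hL2 x hx
    obtain ⟨C, hC⟩ := (isCompact_Icc).exists_bound_of_continuousOn hL
    set M : ℝ := 1 + C with hM
    have hM0 : 0 ≤ M := by
      have h := hC 0 (by norm_num : (0:ℝ) ∈ Set.Icc 0 1)
      have h2 := norm_nonneg (L 0)
      linarith
    have key : ∀ n : ℕ, ∀ x ∈ Set.Icc (0:ℝ) 1, |fT0 x - L x| ≤ (4/5)^n * M := by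
      intro n
      induction n with
      | zero =>
        intro x hx
        have h1 := abs_fT0_le x
        have h2 := hC x hx
        simp only [Real.norm_eq_abs] at h2
        calc |fT0 x - L x| ≤ |fT0 x| + |L x| := abs_sub _ _
          _ ≤ 1 + C := by linarith
          _ = (4/5:ℝ)^0 * M := by simp [hM]
      | succ n ih =>
        rintro x ⟨hx0, hx1⟩
        rcases lt_or_ge x (1/2) with h | h
        · have hmem : x ∈ Set.Ico (0:ℝ) (1/2) := ⟨hx0, h⟩
          have h2x : (2*x) ∈ Set.Icc (0:ℝ) 1 := ⟨by linarith, by linarith⟩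
          rw [heq1 x hmem, hL1 x hmem]
          rw [← mul_sub, abs_mul]
          have := ih (2*x) h2x
          rw [abs_of_nonneg (by norm_num : (0:ℝ) ≤ 1/5)]
          calc (1/5) * |fT0 (2*x) - L (2*x)| ≤ (1/5) * ((4/5)^n * M) := by
                apply mul_le_mul_of_nonneg_left this (by norm_num)
            _ ≤ (4/5)^(n+1) * M := by
                rw [pow_succ]
                nlinarith [pow_nonneg (show (0:ℝ) ≤ 4/5 by norm_num) n, hM0]
        · have hmem : x ∈ Set.Icc (1/2:ℝ) 1 := ⟨h, hx1⟩
          have hy : (2*x-1) ∈ Set.Icc (0:ℝ) 1 := ⟨by linarith, by linarith⟩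
          rw [heq2 x hmem, hL2 x hmem]
          have hdiff : (4/5) * fT0 (2*x-1) + 1/5 - ((4/5) * L (2*x-1) + 1/5)
              = (4/5) * (fT0 (2*x-1) - L (2*x-1)) := by ring
          rw [hdiff, abs_mul, abs_of_nonneg (by norm_num : (0:ℝ) ≤ 4/5)]
          have := ih (2*x-1) hy
          calc (4/5) * |fT0 (2*x-1) - L (2*x-1)| ≤ (4/5) * ((4/5)^n * M) := by
                apply mul_le_mul_of_nonneg_left this (by norm_num)
            _ = (4/5)^(n+1) * M := by rw [pow_succ]; ring
    have htend : Filter.Tendsto (fun n : ℕ => (4/5:ℝ)^n * M) Filter.atTop (nhds 0) := by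
      have h : Filter.Tendsto (fun n : ℕ => (4/5:ℝ)^n) Filter.atTop (nhds 0) :=
        tendsto_pow_atTop_nhds_zero_of_lt_one (by norm_num) (by norm_num)
      simpa using h.mul_const M
    have hzero : |fT0 x - L x| ≤ 0 :=
      ge_of_tendsto htend (Filter.Eventually.of_forall fun n => key n x hx)
    have := abs_nonneg (fT0 x - L x)
    have : |fT0 x - L x| = 0 := le_antisymm hzero this
    have := abs_eq_zero.mp this
    linarith
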